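/- arXiv:2012.10985 — 4 statements merged into one kernel-verified Lean document; each statement's English description precedes it below -/
import Mathlib

section
/- Let a_1,...,a_n ∈ ℝ^n, fix indices i ≠ j, and let a_new = (a_i + a_j)/2. Let v be a nonzero vector orthogonal to a_k for all k ≠ i,j (hence v·a_new = 0 implies v·a_i = -(v·a_j)). Suppose b = ∑ c_k a_k with all c_k ≥ 0, ∑ c_k = 1, and b·v > 0 with a_i·v > 0. Then c_i ≥ c_j, and b lies in the convex hull of the points obtained from a_1,...,a_n by replacing a_j with a_new. -/
lemma sum_split {M : Type*} [AddCommMonoid M] {n : ℕ} (i j : Fin n) (hij : i ≠ j)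
    (f : Fin n → M) :
    ∑ k, f k = f i + f j + ∑ k ∈ Finset.univ \ {i, j}, f k := by
  rw [← Finset.sum_sdiff (Finset.subset_univ {i, j}), Finset.sum_pair hij]
  abel

/-- consistency step of the bisection. If `v` is orthogonal to all
`a k` for `k ≠ i, j` and to the midpoint `a_new = (a i + a j)/2`, and
`b = ∑ c k • a k` is a convex combination with `⟪b, v⟫ > 0` and `⟪a i, v⟫ > 0`,
then `c j ≤ c i` and `b` lies in the convex hull of the vertices obtained by
replacing `a j` with `a_new`. -/
theorem stmt_1 (n : ℕ) (a : Fin n → EuclideanSpace ℝ (Fin n))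
    (i j : Fin n) (hij : i ≠ j)
    (v : EuclideanSpace ℝ (Fin n)) (hv : v ≠ 0)
    (horth : ∀ k, k ≠ i → k ≠ j → (inner ℝ v (a k) : ℝ) = 0)
    (hnew : (inner ℝ v ((2 : ℝ)⁻¹ • (a i + a j)) : ℝ) = 0)
    (c : Fin n → ℝ) (hc0 : ∀ k, 0 ≤ c k) (hc1 : ∑ k, c k = 1)
    (b : EuclideanSpace ℝ (Fin n)) (hb : b = ∑ k, c k • a k)
    (hbv : (0 : ℝ) < inner ℝ b v) (hav : (0 : ℝ) < inner ℝ (a i) v) :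
    c j ≤ c i ∧
      ∃ d : Fin n → ℝ, (∀ k, 0 ≤ d k) ∧ ∑ k, d k = 1 ∧
        b = ∑ k, d k • (Function.update a j ((2 : ℝ)⁻¹ • (a i + a j)) k) := by
  have hmem : ∀ k : Fin n, k ∈ Finset.univ \ ({i, j} : Finset (Fin n)) → k ≠ i ∧ k ≠ j := by
    intro k hk
    simp only [Finset.mem_sdiff, Finset.mem_insert, Finset.mem_singleton] at hk
    exact ⟨fun h => hk.2 (Or.inl h), fun h => hk.2 (Or.inr h)⟩
  have haj : (inner ℝ (a j) v : ℝ) = -(inner ℝ (a i) v : ℝ) := by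
    rw [inner_smul_right, inner_add_right] at hnew
    rw [show (inner ℝ (a j) v : ℝ) = inner ℝ v (a j) from real_inner_comm _ _,
      show (inner ℝ (a i) v : ℝ) = inner ℝ v (a i) from real_inner_comm _ _]
    have h2 : (2:ℝ)⁻¹ ≠ 0 := by norm_num
    rcases mul_eq_zero.mp hnew with h | h
    · exact absurd h h2
    · linarith
  have hbv' : (inner ℝ b v : ℝ) = (c i - c j) * (inner ℝ (a i) v : ℝ) := by
    rw [hb, sum_inner]
    simp only [real_inner_smul_left]
    rw [sum_split i j hij]
    have hz : ∑ k ∈ Finset.univ \ ({i, j} : Finset (Fin n)), c k * (inner ℝ (a k) v : ℝ) = 0 := by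
      apply Finset.sum_eq_zero
      intro k hk
      obtain ⟨h1, h2⟩ := hmem k hk
      rw [real_inner_comm, horth k h1 h2, mul_zero]
    rw [hz, haj]
    ring
  have hci : c j ≤ c i := by nlinarith [hbv, hav, hbv']
  refine ⟨hci, ?_⟩
  set anew := (2 : ℝ)⁻¹ • (a i + a j) with hanew
  refine ⟨fun k => if k = i then c i - c j else if k = j then 2 * c j else c k, ?_, ?_, ?_⟩
  · intro k
    by_cases h1 : k = i
    · simp [h1]; linarith
    · by_cases h2 : k = j
      · simp [h1, h2, Ne.symm hij]; linarith [hc0 j]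
      · simp [h1, h2, hc0 k]
  · rw [sum_split i j hij]
    have hc1' : c i + c j + ∑ k ∈ Finset.univ \ ({i, j} : Finset (Fin n)), c k = 1 := by
      rw [← sum_split i j hij]; exact hc1
    have hsd : ∑ k ∈ Finset.univ \ ({i, j} : Finset (Fin n)),
        (if k = i then c i - c j else if k = j then 2 * c j else c k) =
        ∑ k ∈ Finset.univ \ ({i, j} : Finset (Fin n)), c k := by
      apply Finset.sum_congr rfl
      intro k hk
      obtain ⟨h1, h2⟩ := hmem k hk
      simp [h1, h2]
    rw [hsd]
    have f1 : (if i = i then c i - c j else if i = j then 2 * c j else c i) = c i - c j := by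
      simp
    have f2 : (if j = i then c i - c j else if j = j then 2 * c j else c j) = 2 * c j := by
      simp [Ne.symm hij]
    rw [f1, f2]
    linarith
  · rw [hb, sum_split i j hij, sum_split i j hij
      (fun k => (if k = i then c i - c j else if k = j then 2 * c j else c k) •
        Function.update a j anew k)]
    have hsd : ∑ k ∈ Finset.univ \ ({i, j} : Finset (Fin n)),
        (if k = i then c i - c j else if k = j then 2 * c j else c k) •
          Function.update a j anew k =
        ∑ k ∈ Finset.univ \ ({i, j} : Finset (Fin n)), c k • a k := by
      apply Finset.sum_congr rfl
      intro k hk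
      obtain ⟨h1, h2⟩ := hmem k hk
      simp [h1, h2, Function.update_of_ne h2]
    rw [hsd]
    have f1 : (if i = i then c i - c j else if i = j then 2 * c j else c i) = c i - c j := by
      simp
    have f2 : (if j = i then c i - c j else if j = j then 2 * c j else c j) = 2 * c j := by
      simp [Ne.symm hij]
    rw [f1, f2, Function.update_of_ne hij, Function.update_self]
    have hkey : c i • a i + c j • a j = (c i - c j) • a i + (2 * c j) • anew := by
      rw [hanew]
      module
    rw [hkey]
end

section
/- Let S ⊆ ℝ^n be a set with diameter at most δ contained in {x : ‖x‖₁ = 1}, where δ√n ≤ 1/2. Then for every w, u ∈ S, the angle between w and u is at most 2δ√n. -/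
set_option maxHeartbeats 1000000 in
/-- max angle lemma: if `S` is a subset of the L1 unit sphere of
Euclidean diameter at most `δ` with `δ√n ≤ 1/2`, then any two points of `S`
make an angle at most `2δ√n`. -/
theorem stmt_7 (n : ℕ) (S : Set (EuclideanSpace ℝ (Fin n))) (δ : ℝ)
    (hdiam : Metric.diam S ≤ δ)
    (hS : ∀ x ∈ S, ∑ i, |x i| = 1)
    (hδ : δ * Real.sqrt n ≤ 1 / 2)
    (w u : EuclideanSpace ℝ (Fin n)) (hwS : w ∈ S) (huS : u ∈ S) :
    Real.arccos ((inner ℝ w u : ℝ) / (‖w‖ * ‖u‖)) ≤ 2 * δ * Real.sqrt n := by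
  have hδ0 : 0 ≤ δ := le_trans Metric.diam_nonneg hdiam
  -- norm squared identity and bounds for elements of S
  have hnormsq : ∀ x : EuclideanSpace ℝ (Fin n), ‖x‖ ^ 2 = ∑ i, |x i| ^ 2 := by
    intro x
    rw [EuclideanSpace.norm_eq, Real.sq_sqrt (by positivity)]
    simp [Real.norm_eq_abs]
  have hlow : ∀ x ∈ S, 1 ≤ n * ‖x‖ ^ 2 := by
    intro x hx
    have h1 := sq_sum_le_card_mul_sum_sq (s := (Finset.univ : Finset (Fin n)))
      (f := fun i => |x i|)
    rw [hS x hx] at h1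
    simpa [hnormsq x] using h1
  have hup : ∀ x ∈ S, ‖x‖ ≤ 1 := by
    intro x hx
    have h1 := Finset.sum_sq_le_sq_sum_of_nonneg (s := Finset.univ)
      (f := fun i => |x i|) (fun i _ => abs_nonneg _)
    rw [hS x hx] at h1
    have h2 : ‖x‖ ^ 2 ≤ 1 ^ 2 := by rw [hnormsq x]; simpa using h1
    nlinarith [norm_nonneg x]
  -- n ≥ 1
  have hn : 1 ≤ (n : ℝ) := by
    rcases Nat.eq_zero_or_pos n with h0 | h1
    · exfalso
      have := hS w hwS
      subst h0
      simp at this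
    · exact_mod_cast h1
  -- S is bounded
  have hbdd : Bornology.IsBounded S := by
    apply (Metric.isBounded_closedBall (x := (0 : EuclideanSpace ℝ (Fin n)))
      (r := 1)).subset
    intro x hx
    simpa [Metric.mem_closedBall, dist_zero_right] using hup x hx
  have hdist : ‖w - u‖ ≤ δ := by
    rw [← dist_eq_norm]
    exact le_trans (Metric.dist_le_diam_of_mem hbdd hwS huS) hdiam
  set a := ‖w‖ with ha
  set b := ‖u‖ with hb
  set p : ℝ := inner ℝ w u with hp
  have hsqn : Real.sqrt n ^ 2 = (n : ℝ) := Real.sq_sqrt (by positivity)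
  have hsqn0 : 0 < Real.sqrt n := Real.sqrt_pos.mpr (by linarith)
  have haL : 1 ≤ n * a ^ 2 := hlow w hwS
  have hbL : 1 ≤ n * b ^ 2 := hlow u huS
  have ha0 : 0 < a := by
    rcases (norm_nonneg w).lt_or_eq with h | h
    · exact h
    · exfalso; rw [ha, ← h] at haL; norm_num at haL
  have hb0 : 0 < b := by
    rcases (norm_nonneg u).lt_or_eq with h | h
    · exact h
    · exfalso; rw [hb, ← h] at hbL; norm_num at hbL
  have hab : 0 < a * b := mul_pos ha0 hb0
  have habL : 1 ≤ n * (a * b) := by nlinarith [sq_nonneg (a - b), sq_nonneg (a*b)]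
  have hsub : a ^ 2 - 2 * p + b ^ 2 ≤ δ ^ 2 := by
    have := norm_sub_sq_real w u
    nlinarith [norm_nonneg (w - u)]
  have hpabs : |p| ≤ a * b := abs_real_inner_le_norm w u
  set c : ℝ := p / (a * b) with hc
  set s : ℝ := δ * Real.sqrt n with hs
  have hs0 : 0 ≤ s := by positivity
  have hc1 : c ≤ 1 := by
    rw [hc, div_le_one hab]
    exact le_trans (le_abs_self p) hpabs
  have hc2 : -1 ≤ c := by
    rw [hc, le_div_iff₀ hab]
    have := neg_abs_le p
    linarith
  -- lower bound on c
  have hclow : 1 - s ^ 2 / 2 ≤ c := by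
    rw [hc, le_div_iff₀ hab]
    have hs2 : s ^ 2 = δ ^ 2 * n := by rw [hs, mul_pow, hsqn]
    nlinarith [sq_nonneg (a - b), mul_nonneg (mul_nonneg hδ0 hδ0) (sub_nonneg.mpr habL)]
  set θ : ℝ := Real.arccos c with hθ
  have hθ0 : 0 ≤ θ := Real.arccos_nonneg c
  have hθπ : θ ≤ Real.pi := Real.arccos_le_pi c
  have hcosθ : Real.cos θ = c := Real.cos_arccos hc2 hc1
  have hquad : Real.cos θ ≤ 1 - 2 / Real.pi ^ 2 * θ ^ 2 :=
    Real.cos_le_one_sub_mul_cos_sq (by rw [abs_of_nonneg hθ0]; exact hθπ)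
  have hθsq : 2 / Real.pi ^ 2 * θ ^ 2 ≤ s ^ 2 / 2 := by
    rw [hcosθ] at hquad; linarith
  clear_value a b p c s θ
  have hπ0 : 0 < Real.pi := Real.pi_pos
  have hπ2 : (0:ℝ) < Real.pi ^ 2 := by positivity
  have h1 : θ ^ 2 ≤ Real.pi ^ 2 * s ^ 2 / 4 := by
    rw [div_mul_eq_mul_div, div_le_iff₀ hπ2] at hθsq
    nlinarith
  have h2 : Real.pi ^ 2 ≤ 16 := by nlinarith [Real.pi_le_four]
  have h3 : θ ^ 2 ≤ 4 * s ^ 2 := by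
    nlinarith [mul_le_mul_of_nonneg_right h2 (sq_nonneg s)]
  have hfin : θ ≤ 2 * s := by nlinarith
  rw [hs] at hfin
  linarith
end

section
/- Let a_1,...,a_n ∈ ℝ^n, i ≠ j, and a_new = (a_i + a_j)/2. Then the convex hull of {a_k : k ≠ j} ∪ {a_new} and the convex hull of {a_k : k ≠ i} ∪ {a_new} together cover the convex hull of {a_1,...,a_n}, i.e., their union equals it. -/
open Finset

lemma aux_14 {n : ℕ} (a : Fin n → EuclideanSpace ℝ (Fin n)) (i j : Fin n)
    (hij : i ≠ j) (w : Fin n → ℝ) (h0 : ∀ k, 0 ≤ w k) (h1 : ∑ k, w k = 1)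
    (hle : w j ≤ w i) :
    ∑ k, w k • a k ∈
      convexHull ℝ ((a '' {k | k ≠ j}) ∪ {(2 : ℝ)⁻¹ • (a i + a j)}) := by
  set m : EuclideanSpace ℝ (Fin n) := (2 : ℝ)⁻¹ • (a i + a j) with hm
  set b : Fin n → EuclideanSpace ℝ (Fin n) := fun k => if k = j then m else a k with hb
  set v : Fin n → ℝ := fun k =>
    if k = j then 2 * w j else if k = i then w i - w j else w k with hv
  have hji : j ∈ (univ : Finset (Fin n)) \ {i} := by simp [hij.symm]
  have split : ∀ {M : Type} [AddCommMonoid M] (F : Fin n → M),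
      ∑ k, F k = F i + (F j + ∑ k ∈ (univ \ {i}) \ {j}, F k) := by
    intro M _ F
    rw [← Finset.add_sum_erase _ F (mem_univ i), ← Finset.add_sum_erase _ F
      (by simpa [Finset.erase_eq] using hji)]
    simp [Finset.erase_eq]
  have hv1 : ∑ k, v k = 1 := by
    rw [split v, split w] at *
    have : ∀ k ∈ (univ \ {i}) \ {j}, v k = w k := by
      intro k hk
      simp only [Finset.mem_sdiff, Finset.mem_singleton] at hk
      simp [hv, hk.1.2, hk.2]
    rw [Finset.sum_congr rfl this]
    simp only [hv, if_neg hij, if_pos rfl, ite_true]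
    linarith [h1]
  have hv0 : ∀ k, 0 ≤ v k := by
    intro k
    simp only [hv]
    split_ifs <;> [linarith [h0 j]; linarith; exact h0 k]
  have hvb : ∑ k, v k • b k = ∑ k, w k • a k := by
    rw [split (fun k => v k • b k), split (fun k => w k • a k)]
    have : ∀ k ∈ (univ \ {i}) \ {j}, v k • b k = w k • a k := by
      intro k hk
      simp only [Finset.mem_sdiff, Finset.mem_singleton] at hk
      simp [hv, hb, hk.1.2, hk.2]
    rw [Finset.sum_congr rfl this]
    simp only [hv, hb, if_neg hij, if_pos rfl, ite_true]
    have h2 : ((2 : ℝ) * w j) • m = w j • a i + w j • a j := by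
      have : (2 : ℝ) * w j * 2⁻¹ = w j := by ring
      rw [hm, smul_smul, this, smul_add]
    rw [h2]
    module
  have hmem : ∀ k ∈ (univ : Finset (Fin n)), b k ∈
      (a '' {k | k ≠ j}) ∪ {(2 : ℝ)⁻¹ • (a i + a j)} := by
    intro k _
    by_cases hk : k = j
    · right; simp [hb, hk, hm]
    · left; exact ⟨k, hk, by simp [hb, hk]⟩
  have := Finset.centerMass_mem_convexHull (univ : Finset (Fin n))
    (fun k _ => hv0 k) (by rw [hv1]; norm_num) hmem
  rwa [Finset.centerMass_eq_of_sum_1 _ _ hv1, hvb] at this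

/-- bisecting through the midpoint of the edge `a i – a j` covers
the convex hull: the union of the two sub-hulls equals the hull of all vertices. -/
theorem stmt_14 (n : ℕ) (a : Fin n → EuclideanSpace ℝ (Fin n)) (i j : Fin n)
    (hij : i ≠ j) :
    convexHull ℝ ((a '' {k | k ≠ j}) ∪ {(2 : ℝ)⁻¹ • (a i + a j)}) ∪
      convexHull ℝ ((a '' {k | k ≠ i}) ∪ {(2 : ℝ)⁻¹ • (a i + a j)}) =
    convexHull ℝ (Set.range a) := by
  apply Set.Subset.antisymm
  · have hmid : (2 : ℝ)⁻¹ • (a i + a j) ∈ convexHull ℝ (Set.range a) := by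
      have hc := convex_convexHull ℝ (Set.range a)
      have := hc (subset_convexHull ℝ _ (Set.mem_range_self i))
        (subset_convexHull ℝ _ (Set.mem_range_self j))
        (by norm_num : (0:ℝ) ≤ 2⁻¹) (by norm_num : (0:ℝ) ≤ 2⁻¹) (by norm_num)
      rwa [smul_add]
    apply Set.union_subset <;>
    · apply convexHull_min _ (convex_convexHull ℝ _)
      apply Set.union_subset
      · exact (Set.image_subset_range a _).trans (subset_convexHull ℝ _)
      · simpa using hmid
  · intro x hx
    rw [convexHull_range_eq_exists_affineCombination] at hx
    obtain ⟨s, w, hw0, hw1, rfl⟩ := hx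
    set W : Fin n → ℝ := fun k => if k ∈ s then w k else 0 with hW
    have hW0 : ∀ k, 0 ≤ W k := by
      intro k; simp only [hW]; split_ifs with h; exacts [hw0 k h, le_refl 0]
    have hW1 : ∑ k, W k = 1 := by
      rw [hW, Finset.sum_ite_mem, Finset.univ_inter, hw1]
    have hx' : s.affineCombination ℝ a w = ∑ k, W k • a k := by
      rw [affineCombination_eq_centerMass hw1, Finset.centerMass_eq_of_sum_1 _ _ hw1]
      simp only [hW, ite_smul, zero_smul]
      rw [Finset.sum_ite_mem, Finset.univ_inter]
    rcases le_total (W j) (W i) with h | h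
    · left
      rw [hx']
      exact aux_14 a i j hij W hW0 hW1 h
    · right
      rw [hx']
      have := aux_14 a j i hij.symm W hW0 hW1 h
      rwa [add_comm (a j) (a i)] at this
end

section
/- Let S be an n-simplex in ℝ^n and bisect it through the midpoint of a longest edge, obtaining two sub-simplices. Each new edge (from a remaining vertex to the midpoint) has length at most (√3/2) times the diameter of S. -/
/-- bisecting an `n`-simplex through the midpoint of a longest edge,
each new edge (from a remaining vertex to the midpoint) has length at most
`√3/2` times the diameter (= longest edge length) of the simplex. -/
theorem stmt_15 (n : ℕ) (v : Fin (n + 1) → EuclideanSpace ℝ (Fin n))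
    (hindep : AffineIndependent ℝ v) (i j : Fin (n + 1)) (hij : i ≠ j)
    (hlongest : ∀ k l, dist (v k) (v l) ≤ dist (v i) (v j)) :
    ∀ k, dist (v k) (midpoint ℝ (v i) (v j)) ≤
      (Real.sqrt 3 / 2) * dist (v i) (v j) := by
  intro k
  have hap := EuclideanGeometry.dist_sq_add_dist_sq_eq_two_mul_dist_midpoint_sq_add_half_dist_sq
    (v k) (v i) (v j)
  have h1 := hlongest k i
  have h2 := hlongest k j
  have hd : (0:ℝ) ≤ dist (v i) (v j) := dist_nonneg
  have hsq : dist (v k) (midpoint ℝ (v i) (v j)) ^ 2 ≤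
      ((Real.sqrt 3 / 2) * dist (v i) (v j)) ^ 2 := by
    have h3 : Real.sqrt 3 ^ 2 = 3 := Real.sq_sqrt (by norm_num)
    have hk1 : dist (v k) (v i) ^ 2 ≤ dist (v i) (v j) ^ 2 :=
      pow_le_pow_left₀ dist_nonneg h1 2
    have hk2 : dist (v k) (v j) ^ 2 ≤ dist (v i) (v j) ^ 2 :=
      pow_le_pow_left₀ dist_nonneg h2 2
    nlinarith [hap]
  calc dist (v k) (midpoint ℝ (v i) (v j))
      = Real.sqrt (dist (v k) (midpoint ℝ (v i) (v j)) ^ 2) := by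
        rw [Real.sqrt_sq dist_nonneg]
    _ ≤ Real.sqrt (((Real.sqrt 3 / 2) * dist (v i) (v j)) ^ 2) := Real.sqrt_le_sqrt hsq
    _ = (Real.sqrt 3 / 2) * dist (v i) (v j) := by
        rw [Real.sqrt_sq (by positivity)]
end
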